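/- Let R = k[x,y], and let (D, ∂_D) be the degree 2 differential module with D = R^2 and ∂_D = [[xy, -x^2],[y^2, -xy]]. Then (D, ∂_D) is not isomorphic (as a differential module) to any free flag differential module. -/

import Mathlib

open MvPolynomial DirectSum

/-- Over `R = k[x,y]`, the degree 2 differential module `(D, ∂_D)` with `D = R²`
and `∂_D = [[xy, -x²],[y², -xy]]` is not isomorphic, as a differential module, to any free flag
differential module.  A free flag is a differential module of the form `G = ⊕_{i≥0} G_i` with each
`G_i` free (here `G_i = β i →₀ R`) and `∂(G_i) ⊆ ⊕_{j<i} G_j`; an isomorphism of differential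
modules is a module isomorphism commuting with the differentials. -/
theorem stmt3 (k : Type) [Field k] :
    let R := MvPolynomial (Fin 2) k
    let A : Matrix (Fin 2) (Fin 2) R :=
      !![X 0 * X 1, -(X 0 ^ 2); X 1 ^ 2, -(X 0 * X 1)]
    ¬ ∃ (β : ℕ → Type)
        (d : (⨁ i, (β i →₀ R)) →ₗ[R] (⨁ i, (β i →₀ R)))
        (e : (⨁ i, (β i →₀ R)) ≃ₗ[R] (Fin 2 → R)),
        -- `(G, d)` is a differential module:
        d.comp d = 0 ∧
        -- free flag condition: `d(G_i) ⊆ ⊕_{j<i} G_j`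
        (∀ (i : ℕ) (x : β i →₀ R),
          d (DirectSum.lof R ℕ (fun i => β i →₀ R) i x) ∈
            ⨆ j ∈ Set.Iio i, LinearMap.range (DirectSum.lof R ℕ (fun i => β i →₀ R) j)) ∧
        -- `e` is an isomorphism of differential modules `(G, d) ≅ (D, ∂_D)`
        e.toLinearMap.comp d = (Matrix.toLin' A).comp e.toLinearMap := by
  intro R A
  rintro ⟨β, d, e, hdd, hflag, hcomm⟩
  classical
  -- some β i is nonempty
  have hex : ∃ i, Nonempty (β i) := by
    by_contra h
    push_neg at h
    have hze : ∀ x : ⨁ i, (β i →₀ R), x = 0 := fun x =>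
      DFinsupp.ext fun j => Finsupp.ext fun a => (h j).elim a
    have h1 : e.symm ![1, 0] = e.symm 0 := by rw [hze (e.symm ![1,0]), hze (e.symm 0)]
    have h2 := e.symm.injective h1
    have h3 := congr_fun h2 0
    simp at h3
  set i := Nat.find hex with hi
  obtain ⟨b⟩ := Nat.find_spec hex
  set v := DirectSum.lof R ℕ (fun i => β i →₀ R) i (Finsupp.single b 1) with hv
  have hdv : d v = 0 := by
    have hmem := hflag i (Finsupp.single b 1)
    have hle : (⨆ j ∈ Set.Iio i, LinearMap.range (DirectSum.lof R ℕ (fun i => β i →₀ R) j)) ≤ ⊥ := by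
      refine iSup₂_le fun j hj => ?_
      rintro y ⟨x, rfl⟩
      have hje : IsEmpty (β j) := not_nonempty_iff.mp (Nat.find_min hex hj)
      have hx0 : x = 0 := Finsupp.ext fun a => hje.elim a
      simp [hx0]
    simpa using hle hmem
  set w := e v with hw
  have hAw : A.mulVec w = 0 := by
    have h := LinearMap.congr_fun hcomm v
    simp only [LinearMap.comp_apply, LinearEquiv.coe_coe] at h
    rw [hdv, map_zero] at h
    rw [Matrix.toLin'_apply] at h
    exact h.symm
  have h0 := congr_fun hAw 0
  simp [A, Matrix.mulVec, dotProduct, Fin.sum_univ_two, Matrix.vecHead, Matrix.vecTail] at h0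
  -- h0 should give: X0*X1*w0 - X0^2*w1 = 0, hence X1*w0 = X0*w1
  have hxy : X 1 * w 0 = X 0 * w 1 := by
    have hX0 : (X 0 : R) ≠ 0 := X_ne_zero 0
    have h1 : X 0 * (X 1 * w 0 - X 0 * w 1) = 0 := by linear_combination h0
    rcases mul_eq_zero.mp h1 with h | h
    · exact absurd h hX0
    · exact sub_eq_zero.mp h
  -- constant coefficients of w 0 and w 1 vanish
  have hc0 : constantCoeff (w 0) = 0 := by
    have h1 := congrArg (MvPolynomial.coeff (Finsupp.single (1 : Fin 2) 1)) hxy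
    rw [MvPolynomial.coeff_X_mul' _ _ _, MvPolynomial.coeff_X_mul' _ _ _] at h1
    simpa [MvPolynomial.constantCoeff_eq, Finsupp.single_eq_of_ne] using h1
  have hc1 : constantCoeff (w 1) = 0 := by
    have h1 := congrArg (MvPolynomial.coeff (Finsupp.single (0 : Fin 2) 1)) hxy
    rw [MvPolynomial.coeff_X_mul' _ _ _, MvPolynomial.coeff_X_mul' _ _ _] at h1
    simpa [MvPolynomial.constantCoeff_eq, Finsupp.single_eq_of_ne] using h1.symm
  -- the coordinate functional
  set f : (Fin 2 → R) →ₗ[R] R :=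
    (Finsupp.lapply b) ∘ₗ (DirectSum.component R ℕ (fun i => β i →₀ R) i) ∘ₗ
      (e.symm : (Fin 2 → R) →ₗ[R] ⨁ i, (β i →₀ R)) with hf
  have hfw : f w = 1 := by
    simp only [hf, hw, LinearMap.comp_apply, LinearEquiv.coe_coe,
      LinearEquiv.symm_apply_apply, hv]
    rw [DirectSum.component.lof_self]
    simp
  have hdec : w = w 0 • ![1, 0] + w 1 • ![0, 1] := by
    funext x; fin_cases x <;> simp
  have hone : (1 : R) = w 0 * f ![1, 0] + w 1 * f ![0, 1] := by
    conv_lhs => rw [← hfw, hdec]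
    rw [map_add, map_smul, map_smul, smul_eq_mul, smul_eq_mul]
  have hcon := congrArg MvPolynomial.constantCoeff hone
  rw [map_one, map_add, map_mul, map_mul, hc0, hc1] at hcon
  simp at hcon
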